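/- The relation ▷ on connected components of G − C is transitive: if X ▷ X' and X' ▷ X'', then X ▷ X''. -/

import Mathlib

variable {V : Type}

/-- Neighbourhood of a vertex `u` inside a set `C`. -/
def nbhdIn (G : SimpleGraph V) (C : Set V) (u : V) : Set V := {v ∈ C | G.Adj u v}

/-- Neighbourhood of a set `X` inside `C`. -/
def nbhdSet (G : SimpleGraph V) (C : Set V) (X : Set V) : Set V := ⋃ u ∈ X, nbhdIn G C u

/-- The relation `X ▷ X'`. -/
def Dominates (G : SimpleGraph V) (C : Set V) (X X' : Set V) : Prop :=
  ∀ u ∈ X, nbhdSet G C X' ⊆ nbhdIn G C u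

/-- `X` is (the vertex set of) a connected component of `G - C`. -/
def IsCompOf (G : SimpleGraph V) (C : Set V) (X : Set V) : Prop :=
  ∃ c : (G.induce (Cᶜ : Set V)).ConnectedComponent, X = Subtype.val '' c.supp

/-- Two components are equivalent: all their vertices have the same neighbourhood `C' ⊆ C`. -/
def CompEquiv (G : SimpleGraph V) (C : Set V) (X X' : Set V) : Prop :=
  ∃ C' ⊆ C, (∀ u ∈ X, nbhdIn G C u = C') ∧ (∀ u ∈ X', nbhdIn G C u = C')


/-- The relation `▷` on connected components of `G - C` is transitive. -/
theorem dominates_trans (G : SimpleGraph V) (C : Set V) (hC : G.IsClique C)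
    (X X' X'' : Set V) (hX : IsCompOf G C X) (hX' : IsCompOf G C X')
    (hX'' : IsCompOf G C X'')
    (h1 : Dominates G C X X') (h2 : Dominates G C X' X'') :
    Dominates G C X X'' := by
  obtain ⟨c, rfl⟩ := hX'
  obtain ⟨w, hw⟩ := c.exists_rep
  have hw' : (w : V) ∈ Subtype.val '' c.supp := ⟨w, by rw [SimpleGraph.ConnectedComponent.mem_supp_iff]; exact hw, rfl⟩
  intro u hu v hv
  exact h1 u hu (Set.mem_biUnion hw' (h2 _ hw' hv))
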